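/- Let P and Q be probability measures on a measurable space Ω, and let ε ≥ 0 and δ ≥ 0 be real numbers such that for every measurable set S ⊆ Ω, P(S) ≤ exp(ε)·Q(S) + δ. Then for every measurable function g : Ω → ℝ with 0 ≤ g ≤ 1, the expectations satisfy ∫ g dP ≤ exp(ε)·∫ g dQ + δ. -/

import Mathlib

open Real MeasureTheory

/-- **(ε, δ)-DP condition extends from events to [0,1]-valued expectations.**
If `P S ≤ exp ε * Q S + δ` for every measurable set `S`, then for every
measurable `g : Ω → ℝ` with `0 ≤ g ≤ 1` we have
`∫ g dP ≤ exp ε * ∫ g dQ + δ`. -/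
theorem dp_events_to_expectations {Ω : Type*} [MeasurableSpace Ω]
    (P Q : Measure Ω) [IsProbabilityMeasure P] [IsProbabilityMeasure Q]
    (ε δ : ℝ) (hε : 0 ≤ ε) (hδ : 0 ≤ δ)
    (hDP : ∀ S : Set Ω, MeasurableSet S →
      (P S).toReal ≤ Real.exp ε * (Q S).toReal + δ)
    (g : Ω → ℝ) (hg : Measurable g)
    (hg0 : ∀ ω, 0 ≤ g ω) (hg1 : ∀ ω, g ω ≤ 1) :
    ∫ ω, g ω ∂P ≤ Real.exp ε * ∫ ω, g ω ∂Q + δ := by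
  have hgintP : Integrable g P :=
    (integrable_const (1:ℝ)).mono' hg.aestronglyMeasurable
      (Filter.Eventually.of_forall fun ω => by
        rw [Real.norm_eq_abs, abs_of_nonneg (hg0 ω)]; exact hg1 ω)
  have hgintQ : Integrable g Q :=
    (integrable_const (1:ℝ)).mono' hg.aestronglyMeasurable
      (Filter.Eventually.of_forall fun ω => by
        rw [Real.norm_eq_abs, abs_of_nonneg (hg0 ω)]; exact hg1 ω)
  have hP := hgintP.integral_eq_integral_Ioc_meas_le
    (Filter.Eventually.of_forall hg0) (Filter.Eventually.of_forall hg1)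
  have hQ := hgintQ.integral_eq_integral_Ioc_meas_le
    (Filter.Eventually.of_forall hg0) (Filter.Eventually.of_forall hg1)
  rw [hP, hQ]
  -- integrability of the layer functions
  have meas_anti : ∀ (μ : Measure Ω) [IsProbabilityMeasure μ],
      Antitone (fun t : ℝ => (μ {a | t ≤ g a}).toReal) := by
    intro μ _ s t hst
    apply ENNReal.toReal_mono (measure_ne_top μ _)
    exact measure_mono (fun a ha => le_trans hst ha)
  have intP : IntegrableOn (fun t : ℝ => (P {a | t ≤ g a}).toReal)
      (Set.Ioc (0:ℝ) 1) volume :=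
    (AntitoneOn.integrableOn_isCompact isCompact_Icc ((meas_anti P).antitoneOn _)).mono_set Set.Ioc_subset_Icc_self
  have intQ : IntegrableOn (fun t : ℝ => (Q {a | t ≤ g a}).toReal)
      (Set.Ioc (0:ℝ) 1) volume :=
    (AntitoneOn.integrableOn_isCompact isCompact_Icc ((meas_anti Q).antitoneOn _)).mono_set Set.Ioc_subset_Icc_self
  calc ∫ t in Set.Ioc (0:ℝ) 1, (P {a | t ≤ g a}).toReal
      ≤ ∫ t in Set.Ioc (0:ℝ) 1, (Real.exp ε * (Q {a | t ≤ g a}).toReal + δ) := by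
        apply setIntegral_mono_on intP ((intQ.const_mul _).add (integrableOn_const measure_Ioc_lt_top.ne)) measurableSet_Ioc
        intro t _
        exact hDP _ (measurableSet_le measurable_const hg)
    _ = Real.exp ε * (∫ t in Set.Ioc (0:ℝ) 1, (Q {a | t ≤ g a}).toReal) + δ := by
        rw [integral_add (intQ.const_mul _) (integrableOn_const measure_Ioc_lt_top.ne),
          integral_const_mul, setIntegral_const]
        simp [Real.volume_Ioc]
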